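/- (Per-iteration guaranteed cost decrease, core of Theorem 4.) Let φ be C² on an open set containing the compact box I ⊂ ℝ^{n_u} with strict second-derivative Lipschitz constants M_{i₁i₂} > 0 and worst-case quadratic growth bound Q̄. Let γ ∈ [0,1) be such that |∂²φ/(∂u_{i₂}∂u_{i₁})(u)| ≤ γ M_{i₁i₂} for all u ∈ I and all i₁, i₂. Let u, v ∈ I with S = Σ_{i₁}Σ_{i₂} M_{i₁i₂}|(v_{i₁} − u_{i₁})(v_{i₂} − u_{i₂})|, let δ > 0 satisfy ∇φ(u)ᵀ(v − u) ≤ −δ, let K̲ satisfy 0 < K̲ ≤ 2δ/Q̄, and let K ∈ [K̲, −2∇φ(u)ᵀ(v − u)/S] with K ≤ 1. Then φ(u + K(v − u)) − φ(u) ≤ max[ K̲(K̲ γ Q̄/2 − δ), 2(γ − 1)δ²/Q̄ ] < 0. -/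

import Mathlib

lemma quad_endpoint_bound (γ δ Klow K S Q g C : ℝ) (hγ0 : 0 ≤ γ) (hγ1 : γ < 1)
    (hδ : 0 < δ) (hg : g ≤ -δ) (hS : 0 < S) (hSQ : S ≤ Q)
    (hKlowpos : 0 < Klow) (hKl : Klow ≤ K) (hKb : K ≤ -2 * g / S) (hC : C = γ * S) :
    K * g + C * K ^ 2 / 2 ≤
      max (Klow * (Klow * γ * Q / 2 - δ)) (2 * (γ - 1) * δ ^ 2 / Q) := by
  have hQpos : 0 < Q := lt_of_lt_of_le hS hSQ
  have hψA : Klow * g + C * Klow ^ 2 / 2 ≤ Klow * (Klow * γ * Q / 2 - δ) := by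
    have h1 : Klow * g ≤ Klow * (-δ) := mul_le_mul_of_nonneg_left hg hKlowpos.le
    have h2 : C * Klow ^ 2 ≤ γ * Q * Klow ^ 2 := by
      rw [hC]
      exact mul_le_mul_of_nonneg_right (mul_le_mul_of_nonneg_left hSQ hγ0) (sq_nonneg Klow)
    nlinarith
  have hCnn : 0 ≤ C := by rw [hC]; positivity
  by_cases hcase : g + (C / 2) * (K + Klow) ≤ 0
  · refine le_trans ?_ (le_trans hψA (le_max_left _ _))
    nlinarith [mul_nonneg (sub_nonneg.2 hKl) (neg_nonneg.2 hcase)]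
  · push_neg at hcase
    set b : ℝ := -2 * g / S with hb
    clear_value b
    have hKlowb : Klow ≤ b := hKl.trans hKb
    have hC2 : 0 ≤ C / 2 := by linarith
    have hpos : 0 ≤ g + (C / 2) * (K + b) := by
      nlinarith [mul_nonneg hC2 (sub_nonneg.2 hKlowb)]
    have hψb : K * g + C * K ^ 2 / 2 ≤ b * g + C * b ^ 2 / 2 := by
      nlinarith [mul_nonneg (sub_nonneg.2 hKb) hpos]
    have hbval : b * g + C * b ^ 2 / 2 = 2 * (γ - 1) * g ^ 2 / S := by
      rw [hb, hC]
      field_simp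
      ring
    have hg2 : δ ^ 2 ≤ g ^ 2 := by nlinarith
    have hψB : 2 * (γ - 1) * g ^ 2 / S ≤ 2 * (γ - 1) * δ ^ 2 / Q := by
      rw [div_le_div_iff₀ hS hQpos]
      have h1 : 0 ≤ g ^ 2 * Q - δ ^ 2 * S := by
        nlinarith [mul_nonneg (sub_nonneg.2 hg2) hQpos.le,
          mul_nonneg (sq_nonneg δ) (sub_nonneg.2 hSQ)]
      nlinarith [mul_nonneg (sub_nonneg.2 hγ1.le) h1]
    exact le_trans hψb (le_trans (le_of_eq hbval) (le_trans hψB (le_max_right _ _)))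

lemma max_bound_neg (γ δ Klow Q : ℝ) (hγ0 : 0 ≤ γ) (hγ1 : γ < 1) (hδ : 0 < δ)
    (hQpos : 0 < Q) (hKlowpos : 0 < Klow) (hKlow : Klow ≤ 2 * δ / Q) :
    max (Klow * (Klow * γ * Q / 2 - δ)) (2 * (γ - 1) * δ ^ 2 / Q) < 0 := by
  have h1 : Klow * Q ≤ 2 * δ := (le_div_iff₀ hQpos).1 hKlow
  have h2 : Klow * γ * Q / 2 - δ < 0 := by nlinarith [mul_le_mul_of_nonneg_left h1 hγ0]
  have hA0 : Klow * (Klow * γ * Q / 2 - δ) < 0 := mul_neg_of_pos_of_neg hKlowpos h2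
  have hB0 : 2 * (γ - 1) * δ ^ 2 / Q < 0 := by
    apply div_neg_of_neg_of_pos _ hQpos
    nlinarith [mul_pos (show (0:ℝ) < 1 - γ by linarith) (pow_pos hδ 2)]
  exact max_lt hA0 hB0


/-- Per-iteration guaranteed cost decrease (core of Theorem 4):
with `Q̄ = Σ_{i₁} Σ_{i₂} M i₁ i₂ (uU i₁ - uL i₁)(uU i₂ - uL i₂)`,
`S = Σ_{i₁} Σ_{i₂} M i₁ i₂ |(v i₁ - u i₁)(v i₂ - u i₂)|`,
`|∂²φ/(∂u_{i₂}∂u_{i₁})| ≤ γ M i₁ i₂` on `I` with `γ ∈ [0,1)`,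
`∇φ(u)ᵀ(v-u) ≤ -δ`, `0 < K̲ ≤ 2δ/Q̄`, and `K ∈ [K̲, -2∇φ(u)ᵀ(v-u)/S]` with `K ≤ 1`,
one has `φ(u + K•(v-u)) - φ u ≤ max [K̲(K̲ γ Q̄/2 - δ), 2(γ-1)δ²/Q̄] < 0`. -/
theorem per_iteration_cost_decrease
    {n : ℕ} (uL uU : Fin n → ℝ)
    (φ : (Fin n → ℝ) → ℝ)
    (U : Set (Fin n → ℝ)) (hUopen : IsOpen U) (hIU : Set.Icc uL uU ⊆ U)
    (hφ : ContDiffOn ℝ 2 φ U)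
    (M : Fin n → Fin n → ℝ) (hMpos : ∀ i₁ i₂, 0 < M i₁ i₂)
    (hM : ∀ u ∈ Set.Icc uL uU, ∀ i₁ i₂,
      |fderiv ℝ (fun x => fderiv ℝ φ x (Pi.single i₁ 1)) u (Pi.single i₂ 1)| < M i₁ i₂)
    (γ : ℝ) (hγ : γ ∈ Set.Ico (0 : ℝ) 1)
    (hγM : ∀ u ∈ Set.Icc uL uU, ∀ i₁ i₂,
      |fderiv ℝ (fun x => fderiv ℝ φ x (Pi.single i₁ 1)) u (Pi.single i₂ 1)|
        ≤ γ * M i₁ i₂)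
    (u v : Fin n → ℝ) (hu : u ∈ Set.Icc uL uU) (hv : v ∈ Set.Icc uL uU)
    (δ : ℝ) (hδ : 0 < δ)
    (hdesc : fderiv ℝ φ u (v - u) ≤ -δ)
    (Klow : ℝ) (hKlowpos : 0 < Klow)
    (hKlow : Klow ≤ 2 * δ / ∑ i₁, ∑ i₂, M i₁ i₂ * (uU i₁ - uL i₁) * (uU i₂ - uL i₂))
    (K : ℝ) (hK1 : K ≤ 1)
    (hK : K ∈ Set.Icc Klow
      (-2 * fderiv ℝ φ u (v - u) /
        ∑ i₁, ∑ i₂, M i₁ i₂ * |(v i₁ - u i₁) * (v i₂ - u i₂)|)) :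
    φ (u + K • (v - u)) - φ u ≤
        max
          (Klow * (Klow * γ *
              (∑ i₁, ∑ i₂, M i₁ i₂ * (uU i₁ - uL i₁) * (uU i₂ - uL i₂)) / 2 - δ))
          (2 * (γ - 1) * δ ^ 2 /
            ∑ i₁, ∑ i₂, M i₁ i₂ * (uU i₁ - uL i₁) * (uU i₂ - uL i₂)) ∧
      max
          (Klow * (Klow * γ *
              (∑ i₁, ∑ i₂, M i₁ i₂ * (uU i₁ - uL i₁) * (uU i₂ - uL i₂)) / 2 - δ))
          (2 * (γ - 1) * δ ^ 2 /
            ∑ i₁, ∑ i₂, M i₁ i₂ * (uU i₁ - uL i₁) * (uU i₂ - uL i₂)) < 0 := by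
  classical
  set d : Fin n → ℝ := v - u with hd
  set Q : ℝ := ∑ i₁, ∑ i₂, M i₁ i₂ * (uU i₁ - uL i₁) * (uU i₂ - uL i₂) with hQ
  set S : ℝ := ∑ i₁, ∑ i₂, M i₁ i₂ * |(v i₁ - u i₁) * (v i₂ - u i₂)| with hS
  set g : ℝ := fderiv ℝ φ u d with hg
  have hdi : ∀ i, d i = v i - u i := fun i => rfl
  -- basic positivity facts
  have hgneg : g ≤ -δ := hdesc
  have hdne : d ≠ 0 := by
    intro h
    rw [hg, h] at hgneg
    simp at hgneg
    linarith
  obtain ⟨j, hj⟩ : ∃ j, v j - u j ≠ 0 := by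
    by_contra h
    push_neg at h
    exact hdne (funext fun i => by simp [hdi, h i])
  have hSpos : 0 < S := by
    rw [hS]
    apply Finset.sum_pos' (fun i₁ _ => Finset.sum_nonneg fun i₂ _ =>
      mul_nonneg (hMpos i₁ i₂).le (abs_nonneg _))
    refine ⟨j, Finset.mem_univ j, ?_⟩
    apply Finset.sum_pos' (fun i₂ _ => mul_nonneg (hMpos j i₂).le (abs_nonneg _))
    refine ⟨j, Finset.mem_univ j, ?_⟩
    exact mul_pos (hMpos j j) (abs_pos.2 (mul_ne_zero hj hj))
  have hdb : ∀ i, |d i| ≤ uU i - uL i := by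
    intro i
    rw [hdi, abs_le]
    constructor <;> nlinarith [hu.1 i, hu.2 i, hv.1 i, hv.2 i]
  have hSQ : S ≤ Q := by
    rw [hS, hQ]
    apply Finset.sum_le_sum
    intro i₁ _
    apply Finset.sum_le_sum
    intro i₂ _
    rw [abs_mul, mul_assoc]
    apply mul_le_mul_of_nonneg_left _ (hMpos i₁ i₂).le
    have h1 : |v i₁ - u i₁| ≤ uU i₁ - uL i₁ := hdb i₁
    have h2 : |v i₂ - u i₂| ≤ uU i₂ - uL i₂ := hdb i₂
    exact mul_le_mul h1 h2 (abs_nonneg _) (le_trans (abs_nonneg _) h1)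
  have hQpos : 0 < Q := lt_of_lt_of_le hSpos hSQ
  have hK0 : 0 < K := lt_of_lt_of_le hKlowpos hK.1
  -- the segment stays in the box
  have hbox : ∀ t ∈ Set.Icc (0:ℝ) 1, u + t • d ∈ Set.Icc uL uU := by
    intro t ht
    constructor <;> intro i <;>
      simp only [Pi.add_apply, Pi.smul_apply, smul_eq_mul, hdi] <;>
      nlinarith [hu.1 i, hu.2 i, hv.1 i, hv.2 i, ht.1, ht.2]
  have hmem : ∀ t ∈ Set.Icc (0:ℝ) K, u + t • d ∈ Set.Icc uL uU :=
    fun t ht => hbox t (Set.Icc_subset_Icc le_rfl hK1 ht)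
  -- differentiability infrastructure
  have hφ1 : ContDiffOn ℝ 1 (fderiv ℝ φ) U := by
    apply hφ.fderiv_of_isOpen hUopen
    norm_num
  have hdiffφ : ∀ x ∈ Set.Icc uL uU, HasFDerivAt φ (fderiv ℝ φ x) x := fun x hx =>
    ((hφ.differentiableOn (by norm_num)).differentiableAt
      (hUopen.mem_nhds (hIU hx))).hasFDerivAt
  have hdiffφ' : ∀ x ∈ Set.Icc uL uU,
      HasFDerivAt (fderiv ℝ φ) (fderiv ℝ (fderiv ℝ φ) x) x := fun x hx =>
    ((hφ1.differentiableOn one_ne_zero).differentiableAt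
      (hUopen.mem_nhds (hIU hx))).hasFDerivAt
  -- second derivative bound
  have hrep : ∀ (L : (Fin n → ℝ) →L[ℝ] ℝ), L d = ∑ i, d i * L (Pi.single i 1) := by
    intro L
    have h : d = ∑ i, d i • (Pi.single i (1:ℝ) : Fin n → ℝ) := by
      funext j'; simp [Finset.sum_apply, Pi.single_apply]
    conv_lhs => rw [h]
    simp [map_sum]
  have hmixed : ∀ x ∈ Set.Icc uL uU, ∀ i₁ i₂,
      |(fderiv ℝ (fderiv ℝ φ) x (Pi.single i₂ 1)) (Pi.single i₁ 1)| ≤ γ * M i₁ i₂ := by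
    intro x hx i₁ i₂
    have h := (hdiffφ' x hx).clm_apply
      (hasFDerivAt_const (Pi.single i₁ (1:ℝ) : Fin n → ℝ) x)
    have heq : fderiv ℝ (fun y => fderiv ℝ φ y (Pi.single i₁ 1)) x (Pi.single i₂ 1)
        = (fderiv ℝ (fderiv ℝ φ) x (Pi.single i₂ 1)) (Pi.single i₁ 1) := by
      rw [h.fderiv]; simp
    rw [← heq]
    exact hγM x hx i₁ i₂
  have hbound : ∀ x ∈ Set.Icc uL uU, |(fderiv ℝ (fderiv ℝ φ) x d) d| ≤ γ * S := by
    intro x hx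
    have hSswap : γ * S = ∑ i₂, ∑ i₁, γ * (M i₁ i₂ * |(v i₁ - u i₁) * (v i₂ - u i₂)|) := by
      rw [hS, Finset.mul_sum]
      simp_rw [Finset.mul_sum]
      exact Finset.sum_comm
    have e1 : (fderiv ℝ (fderiv ℝ φ) x d) d
        = ∑ i₂, d i₂ * ((fderiv ℝ (fderiv ℝ φ) x (Pi.single i₂ 1)) d) := by
      have h := hrep ((fderiv ℝ (fderiv ℝ φ) x).flip d)
      simpa [ContinuousLinearMap.flip_apply] using h
    rw [e1, hSswap]
    refine le_trans (Finset.abs_sum_le_sum_abs _ _) (Finset.sum_le_sum ?_)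
    intro i₂ _
    rw [hrep (fderiv ℝ (fderiv ℝ φ) x (Pi.single i₂ 1)), Finset.mul_sum]
    refine le_trans (Finset.abs_sum_le_sum_abs _ _) (Finset.sum_le_sum ?_)
    intro i₁ _
    rw [abs_mul, abs_mul]
    have hm := hmixed x hx i₁ i₂
    have h1 : |d i₂| * (|d i₁| * |(fderiv ℝ (fderiv ℝ φ) x (Pi.single i₂ 1)) (Pi.single i₁ 1)|)
        ≤ |d i₂| * (|d i₁| * (γ * M i₁ i₂)) :=
      mul_le_mul_of_nonneg_left (mul_le_mul_of_nonneg_left hm (abs_nonneg _)) (abs_nonneg _)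
    refine le_trans h1 (le_of_eq ?_)
    have hv1 : |d i₁| = |v i₁ - u i₁| := by rw [hdi]
    have hv2 : |d i₂| = |v i₂ - u i₂| := by rw [hdi]
    rw [hv1, hv2, abs_mul]
    ring
  -- derivatives along the segment
  have hF : ∀ t : ℝ, HasDerivAt (fun s : ℝ => u + s • d) d t := by
    intro t
    simpa using ((hasDerivAt_id t).smul_const d).const_add u
  have hh : ∀ t ∈ Set.Icc (0:ℝ) K,
      HasDerivAt (fun s => φ (u + s • d)) (fderiv ℝ φ (u + t • d) d) t :=
    fun t ht => (hdiffφ _ (hmem t ht)).comp_hasDerivAt t (hF t)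
  have hh1 : ∀ t ∈ Set.Icc (0:ℝ) K,
      HasDerivAt (fun s => fderiv ℝ φ (u + s • d) d)
        ((fderiv ℝ (fderiv ℝ φ) (u + t • d) d) d) t := by
    intro t ht
    have h1 : HasDerivAt (fun s => fderiv ℝ φ (u + s • d))
        (fderiv ℝ (fderiv ℝ φ) (u + t • d) d) t :=
      (hdiffφ' _ (hmem t ht)).comp_hasDerivAt t (hF t)
    have h2 := h1.clm_apply (hasDerivAt_const t d)
    simpa using h2
  set C : ℝ := γ * S with hC
  have hCnn : 0 ≤ C := mul_nonneg hγ.1 hSpos.le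
  have hconv : Convex ℝ (Set.Icc (0:ℝ) K) := convex_Icc _ _
  have h0mem : (0:ℝ) ∈ Set.Icc (0:ℝ) K := Set.left_mem_Icc.2 hK0.le
  have hKmem : K ∈ Set.Icc (0:ℝ) K := Set.right_mem_Icc.2 hK0.le
  -- variation bound on the first derivative
  have hvar : ∀ t ∈ Set.Icc (0:ℝ) K,
      fderiv ℝ φ (u + t • d) d - fderiv ℝ φ u d ≤ C * t := by
    intro t ht
    have hmvt := Convex.norm_image_sub_le_of_norm_hasDerivWithin_le
      (f := fun s => fderiv ℝ φ (u + s • d) d)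
      (f' := fun s => (fderiv ℝ (fderiv ℝ φ) (u + s • d) d) d) (C := C)
      (fun s hs => (hh1 s hs).hasDerivWithinAt)
      (fun s hs => by
        rw [Real.norm_eq_abs]
        exact hbound _ (hmem s hs))
      hconv h0mem ht
    have h0 : (fun s : ℝ => fderiv ℝ φ (u + s • d) d) 0 = fderiv ℝ φ u d := by
      norm_num
    rw [zero_smul, add_zero, Real.norm_eq_abs, Real.norm_eq_abs, sub_zero, abs_of_nonneg ht.1] at hmvt
    linarith [(abs_le.1 hmvt).2]
  -- the key Taylor-type inequality
  have key : φ (u + K • d) - φ u ≤ K * g + C * K ^ 2 / 2 := by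
    have hGderiv : ∀ t ∈ Set.Icc (0:ℝ) K, HasDerivAt
        (fun s => φ (u + s • d) - φ u - s * g - C * s ^ 2 / 2)
        (fderiv ℝ φ (u + t • d) d - g - C * t) t := by
      intro t ht
      have h1 := hh t ht
      have h2 : HasDerivAt (fun s : ℝ => s * g) g t := by
        simpa using (hasDerivAt_id t).mul_const g
      have h3 : HasDerivAt (fun s : ℝ => C * s ^ 2 / 2) (C * t) t := by
        have h4 : HasDerivAt (fun s : ℝ => s ^ 2) (2 * t) t := by
          simpa using hasDerivAt_pow 2 t
        have h5 := (h4.const_mul C).div_const 2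
        have h6 : C * (2 * t) / 2 = C * t := by ring
        rwa [h6] at h5
      exact ((h1.sub_const (φ u)).sub h2).sub h3
    have hanti : AntitoneOn (fun s => φ (u + s • d) - φ u - s * g - C * s ^ 2 / 2)
        (Set.Icc (0:ℝ) K) := by
      apply antitoneOn_of_deriv_nonpos hconv
      · exact fun t ht => ((hGderiv t ht).differentiableAt.continuousAt).continuousWithinAt
      · intro t ht
        rw [interior_Icc] at ht
        exact ((hGderiv t (Set.mem_Icc_of_Ioo ht)).differentiableAt).differentiableWithinAt
      · intro t ht
        rw [interior_Icc] at ht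
        rw [(hGderiv t (Set.mem_Icc_of_Ioo ht)).deriv]
        have := hvar t (Set.mem_Icc_of_Ioo ht)
        rw [← hg] at this
        linarith
    have hfin := hanti h0mem hKmem hK0.le
    simp only [zero_smul, add_zero, zero_mul, sub_zero, ne_eq, OfNat.ofNat_ne_zero,
      not_false_eq_true, zero_pow, mul_zero, zero_div, sub_self] at hfin
    nlinarith [hfin]
  -- conclude with the auxiliary algebra lemmas
  exact ⟨le_trans key (quad_endpoint_bound γ δ Klow K S Q g C hγ.1 hγ.2 hδ hgneg hSpos hSQ
      hKlowpos hK.1 hK.2 hC),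
    max_bound_neg γ δ Klow Q hγ.1 hγ.2 hδ hQpos hKlowpos hKlow⟩
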